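/- Let L ≥ 3 be an integer, λ > 0, y > y* (with y* as above), and let x̄ > 0 be the larger positive root of f(x;y) = x^{2L-1} - √λ·y·x^{L-1} + λ·x = 0 and x̲ > 0 the smaller. Then the x-derivative of f at x̄ is strictly positive: (2L-1)·x̄^{2L-2} - √λ·(L-1)·y·x̄^{L-2} + λ > 0, and at x̲ it is strictly negative: (2L-1)·x̲^{2L-2} - √λ·(L-1)·y·x̲^{L-2} + λ < 0. -/

import Mathlib

/-- Core estimate: for the reduced polynomial `g(x) = x^(2k+4) - a x^(k+1) + lam`,
any positive root `x` with the threshold inequality satisfies the stated bounds. -/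
lemma stmt_7_core (k : ℕ) (K lam y xbar xund : ℝ) (hKdef : (k : ℝ) = K)
    (hlam : 0 < lam) (hxu : 0 < xund) (hxx : xund < xbar)
    (hy : (((K + 1) / (K + 3)) ^ ((K + 3) / (2 * K + 4))
        + ((K + 1) / (K + 3))⁻¹ ^ ((K + 1) / (2 * K + 4)))
        * lam ^ ((1 : ℝ) / (2 * K + 4)) < y)
    (g1 : xbar ^ (2 * k + 4) - Real.sqrt lam * y * xbar ^ (k + 1) + lam = 0)
    (g2 : xund ^ (2 * k + 4) - Real.sqrt lam * y * xund ^ (k + 1) + lam = 0) :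
    (K + 1) * lam < (K + 3) * xbar ^ (2 * k + 4) ∧
      (K + 3) * xund ^ (2 * k + 4) < (K + 1) * lam := by
  have hK0 : (0 : ℝ) ≤ K := hKdef ▸ Nat.cast_nonneg k
  have hK1 : (0 : ℝ) < K + 1 := by linarith
  have hK3 : (0 : ℝ) < K + 3 := by linarith
  have hK24 : (0 : ℝ) < 2 * K + 4 := by linarith
  have hxb : 0 < xbar := hxu.trans hxx
  have hsl : 0 < Real.sqrt lam := Real.sqrt_pos.mpr hlam
  set r : ℝ := (K + 1) / (K + 3) with hrdef
  have hr : 0 < r := div_pos hK1 hK3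
  have hy0 : 0 < y := lt_trans (by positivity) hy
  set p : ℝ := (2 * K + 4) / (K + 1) with hpdef
  have hp : 1 < p := by
    rw [hpdef, lt_div_iff₀ hK1]; linarith
  have hp0 : 0 < p := lt_trans one_pos hp
  set β : ℝ := (K + 1) / (2 * K + 4) with hβdef
  set c : ℝ := r * lam with hcdef
  have hc : 0 < c := mul_pos hr hlam
  set τ : ℝ := c ^ β with hτdef
  have hτ : 0 < τ := Real.rpow_pos_of_pos hc β
  have hτp : τ ^ p = c := by
    rw [hτdef, ← Real.rpow_mul hc.le,
      show β * p = 1 by rw [hβdef, hpdef]; field_simp, Real.rpow_one]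
  have key : ∀ x : ℝ, 0 < x → (x ^ (k + 1) : ℝ) ^ p = x ^ (2 * k + 4) := by
    intro x hx
    rw [← Real.rpow_natCast x (k + 1), ← Real.rpow_mul hx.le,
      show ((k + 1 : ℕ) : ℝ) * p = ((2 * k + 4 : ℕ) : ℝ) by
        push_cast; rw [hKdef, hpdef]; field_simp,
      Real.rpow_natCast]
  -- the crucial strict inequality at τ
  have hφτ : τ ^ p - Real.sqrt lam * y * τ + lam < 0 := by
    have hstar : Real.sqrt lam *
        ((r ^ ((K + 3) / (2 * K + 4)) + r⁻¹ ^ β) * lam ^ ((1 : ℝ) / (2 * K + 4))) * τ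
        = c + lam := by
      have hτeq : τ = r ^ β * lam ^ β := by
        rw [hτdef, hcdef, Real.mul_rpow hr.le hlam.le]
      have eA : r ^ ((K + 3) / (2 * K + 4)) * r ^ β = r := by
        rw [← Real.rpow_add hr, hβdef, ← add_div,
          show K + 3 + (K + 1) = 2 * K + 4 by ring,
          div_self (ne_of_gt hK24), Real.rpow_one]
      have eB : r⁻¹ ^ β * r ^ β = 1 := by
        rw [← Real.mul_rpow (inv_nonneg.mpr hr.le) hr.le, inv_mul_cancel₀ hr.ne',
          Real.one_rpow]
      have eL : Real.sqrt lam * (lam ^ ((1 : ℝ) / (2 * K + 4)) * lam ^ β) = lam := by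
        rw [Real.sqrt_eq_rpow, ← Real.rpow_add hlam, ← Real.rpow_add hlam,
          show (1 : ℝ) / 2 + ((1 : ℝ) / (2 * K + 4) + β) = 1 by
            rw [hβdef]; field_simp; ring,
          Real.rpow_one]
      calc Real.sqrt lam *
          ((r ^ ((K + 3) / (2 * K + 4)) + r⁻¹ ^ β) * lam ^ ((1 : ℝ) / (2 * K + 4))) * τ
          = (r ^ ((K + 3) / (2 * K + 4)) * r ^ β + r⁻¹ ^ β * r ^ β) *
            (Real.sqrt lam * (lam ^ ((1 : ℝ) / (2 * K + 4)) * lam ^ β)) := by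
            rw [hτeq]; ring
        _ = (r + 1) * lam := by rw [eA, eB, eL]
        _ = c + lam := by rw [hcdef]; ring
    have hlt : Real.sqrt lam *
        ((r ^ ((K + 3) / (2 * K + 4)) + r⁻¹ ^ β) * lam ^ ((1 : ℝ) / (2 * K + 4))) * τ
        < Real.sqrt lam * y * τ := by
      apply mul_lt_mul_of_pos_right _ hτ
      exact (mul_lt_mul_iff_right₀ hsl).mpr hy
    rw [hτp]
    rw [hstar] at hlt
    linarith
  -- strict convexity of φ(z) = z^p - a z + lam on [0, ∞)
  have hconv : StrictConvexOn ℝ (Set.Ici 0)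
      (fun z : ℝ => z ^ p - Real.sqrt lam * y * z + lam) := by
    have haff : ConvexOn ℝ (Set.Ici (0 : ℝ))
        (fun z : ℝ => -(Real.sqrt lam * y) * z + lam) := by
      refine ⟨convex_Ici 0, ?_⟩
      intro u hu v hv θ μ hθ hμ hθμ
      simp only [smul_eq_mul]
      apply le_of_eq
      nlinarith [hθμ]
    have h := (strictConvexOn_rpow hp).add_convexOn haff
    convert h using 1
    ext z
    simp only [Pi.add_apply]
    ring
    ext z
    simp only [Pi.add_apply]
    ring
  -- values of φ at the roots
  have hst : xund ^ (k + 1) < xbar ^ (k + 1) := by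
    apply pow_lt_pow_left₀ hxx hxu.le
    omega
  have hs0 : 0 < xund ^ (k + 1) := pow_pos hxu _
  have ht0 : 0 < xbar ^ (k + 1) := pow_pos hxb _
  have hφs : (xund ^ (k + 1) : ℝ) ^ p - Real.sqrt lam * y * xund ^ (k + 1) + lam = 0 := by
    rw [key xund hxu]; exact g2
  have hφt : (xbar ^ (k + 1) : ℝ) ^ p - Real.sqrt lam * y * xbar ^ (k + 1) + lam = 0 := by
    rw [key xbar hxb]; exact g1
  -- τ lies strictly between the two roots (in the z = x^(k+1) variable)
  have hsτ : xund ^ (k + 1) < τ := by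
    by_contra hcon
    push_neg at hcon
    rcases eq_or_lt_of_le hcon with he | hlt
    · rw [he] at hφτ; linarith
    · have hseg : xund ^ (k + 1) ∈ openSegment ℝ τ (xbar ^ (k + 1)) := by
        rw [openSegment_eq_Ioo (hlt.trans hst)]
        exact ⟨hlt, hst⟩
      have h0 := hconv.lt_on_openSegment (Set.mem_Ici.mpr hτ.le)
        (Set.mem_Ici.mpr ht0.le) (ne_of_lt (hlt.trans hst)) hseg
      have hmax : max (τ ^ p - Real.sqrt lam * y * τ + lam)
          ((xbar ^ (k + 1) : ℝ) ^ p - Real.sqrt lam * y * xbar ^ (k + 1) + lam) ≤ 0 :=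
        max_le hφτ.le (le_of_eq hφt)
      linarith
  have hτt : τ < xbar ^ (k + 1) := by
    by_contra hcon
    push_neg at hcon
    rcases eq_or_lt_of_le hcon with he | hlt
    · rw [← he] at hφτ; linarith
    · have hseg : xbar ^ (k + 1) ∈ openSegment ℝ (xund ^ (k + 1)) τ := by
        rw [openSegment_eq_Ioo (hst.trans hlt)]
        exact ⟨hst, hlt⟩
      have h0 := hconv.lt_on_openSegment (Set.mem_Ici.mpr hs0.le)
        (Set.mem_Ici.mpr hτ.le) (ne_of_lt (hst.trans hlt)) hseg
      have hmax : max ((xund ^ (k + 1) : ℝ) ^ p - Real.sqrt lam * y * xund ^ (k + 1) + lam)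
          (τ ^ p - Real.sqrt lam * y * τ + lam) ≤ 0 :=
        max_le (le_of_eq hφs) hφτ.le
      linarith
  -- transfer back to the x variable
  have hbar : c < xbar ^ (2 * k + 4) := by
    have h := Real.rpow_lt_rpow hτ.le hτt hp0
    rwa [hτp, key xbar hxb] at h
  have hund : xund ^ (2 * k + 4) < c := by
    have h := Real.rpow_lt_rpow hs0.le hsτ hp0
    rwa [key xund hxu, hτp] at h
  have hceq : (K + 3) * c = (K + 1) * lam := by
    rw [hcdef, hrdef, ← mul_assoc, ← mul_div_assoc, mul_comm (K + 3) (K + 1),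
      mul_div_assoc, div_self (ne_of_gt hK3), mul_one]
  constructor
  · have h := mul_lt_mul_of_pos_left hbar hK3
    linarith
  · have h := mul_lt_mul_of_pos_left hund hK3
    linarith

/-- For `y > y*`, the derivative of `f(·;y)` is strictly positive at the larger positive
root and strictly negative at the smaller positive root. -/
theorem stmt_7 (L : ℕ) (hL : 3 ≤ L) (lam y xbar xund : ℝ) (hlam : 0 < lam)
    (hy : ((((L : ℝ) - 2) / L) ^ ((L : ℝ) / (2 * (L : ℝ) - 2))
        + ((L : ℝ) / ((L : ℝ) - 2)) ^ (((L : ℝ) - 2) / (2 * (L : ℝ) - 2)))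
        * lam ^ ((1 : ℝ) / (2 * (L : ℝ) - 2)) < y)
    (hxu : 0 < xund) (hxx : xund < xbar)
    (h1 : xbar ^ (2 * L - 1) - Real.sqrt lam * y * xbar ^ (L - 1) + lam * xbar = 0)
    (h2 : xund ^ (2 * L - 1) - Real.sqrt lam * y * xund ^ (L - 1) + lam * xund = 0) :
    0 < (2 * (L : ℝ) - 1) * xbar ^ (2 * L - 2)
        - Real.sqrt lam * ((L : ℝ) - 1) * y * xbar ^ (L - 2) + lam ∧
      (2 * (L : ℝ) - 1) * xund ^ (2 * L - 2)
        - Real.sqrt lam * ((L : ℝ) - 1) * y * xund ^ (L - 2) + lam < 0 := by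
  obtain ⟨k, rfl⟩ : ∃ k, L = k + 3 := ⟨L - 3, by omega⟩
  rw [show 2 * (k + 3) - 1 = 2 * k + 5 by omega, show (k + 3) - 1 = k + 2 by omega] at h1 h2
  rw [show 2 * (k + 3) - 2 = 2 * k + 4 by omega, show (k + 3) - 2 = k + 1 by omega]
  push_cast at hy ⊢
  generalize hKdef : (k : ℝ) = K at hy ⊢
  rw [show K + 3 - 2 = K + 1 by ring, show 2 * (K + 3) - 2 = 2 * K + 4 by ring,
    show (K + 3) / (K + 1) = ((K + 1) / (K + 3))⁻¹ by rw [inv_div]] at hy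
  have hxb : 0 < xbar := hxu.trans hxx
  have g1 : xbar ^ (2 * k + 4) - Real.sqrt lam * y * xbar ^ (k + 1) + lam = 0 := by
    have h : xbar * (xbar ^ (2 * k + 4) - Real.sqrt lam * y * xbar ^ (k + 1) + lam) = 0 := by
      rw [← h1]; ring
    rcases mul_eq_zero.mp h with h | h
    · exact absurd h hxb.ne'
    · exact h
  have g2 : xund ^ (2 * k + 4) - Real.sqrt lam * y * xund ^ (k + 1) + lam = 0 := by
    have h : xund * (xund ^ (2 * k + 4) - Real.sqrt lam * y * xund ^ (k + 1) + lam) = 0 := by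
      rw [← h2]; ring
    rcases mul_eq_zero.mp h with h | h
    · exact absurd h hxu.ne'
    · exact h
  obtain ⟨hb, hu⟩ := stmt_7_core k K lam y xbar xund hKdef hlam hxu hxx hy g1 g2
  constructor
  · have red1 : (2 * (K + 3) - 1) * xbar ^ (2 * k + 4)
        - Real.sqrt lam * (K + 3 - 1) * y * xbar ^ (k + 1) + lam
        = (K + 3) * xbar ^ (2 * k + 4) - (K + 1) * lam := by
      linear_combination (K + 2) * g1
    rw [red1]
    linarith
  · have red2 : (2 * (K + 3) - 1) * xund ^ (2 * k + 4)
        - Real.sqrt lam * (K + 3 - 1) * y * xund ^ (k + 1) + lam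
        = (K + 3) * xund ^ (2 * k + 4) - (K + 1) * lam := by
      linear_combination (K + 2) * g2
    rw [red2]
    linarith
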